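/- In the two-subspace JISA problem with M = d₁ + d₂, among all assignments of the M orthonormal eigenvectors u₁,…,u_M (with eigenvalues λ₁ ≥ ⋯ ≥ λ_M of Q⁻ᴴV₁Q⁻¹) into a block U₁ of d₁ scaled columns u_i/√λ_i and a block U₂ of d₂ unscaled columns, the assignment that puts the d₁ eigenvectors with smallest eigenvalues into U₁ maximizes |det [U₁ U₂]|, and hence globally minimizes the surrogate cost Σ_{ℓ=1,2} tr(W̄_ℓᴴ V_ℓ W̄_ℓ) − 2 log|det W| with W = [W̄₁ W̄₂]ᴴ, W̄_ℓ = Q⁻¹ U_ℓ. -/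

import Mathlib

open Matrix ComplexOrder

lemma sm_le {d : ℕ} {f : Fin d → ℕ} (hf : StrictMono f) (k : Fin d) : (k : ℕ) ≤ f k := by
  obtain ⟨k, hk⟩ := k
  induction k with
  | zero => exact Nat.zero_le _
  | succ m ih =>
      have hm : m < d := by omega
      have h1 : (⟨m, hm⟩ : Fin d) < ⟨m + 1, hk⟩ := by simp [Fin.lt_def]
      have h2 := hf h1
      have h3 : m ≤ f ⟨m, hm⟩ := by simpa using ih hm
      show m + 1 ≤ f ⟨m + 1, hk⟩
      omega

lemma emb_le {d₁ d₂ : ℕ} (S : Finset (Fin (d₁ + d₂))) (hc : S.card = d₁)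
    (k : Fin d₁) : ((S.orderEmbOfFin hc k : Fin (d₁ + d₂)) : ℕ) ≤ d₂ + k := by
  set e := S.orderEmbOfFin hc with he
  have hlt : ∀ j : Fin d₁, ((e j : Fin (d₁ + d₂)) : ℕ) < d₁ + d₂ := fun j => (e j).isLt
  have hg : StrictMono (fun j : Fin d₁ => (d₁ + d₂ - 1) - ((e j.rev : Fin (d₁+d₂)) : ℕ)) := by
    intro a b hab
    have h1 : b.rev < a.rev := by simpa [Fin.rev_lt_rev] using hab
    have h2 : (e b.rev : Fin (d₁+d₂)) < e a.rev := e.strictMono h1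
    have h3 := hlt a.rev
    have h4 := hlt b.rev
    have h5 : ((e b.rev : Fin (d₁+d₂)) : ℕ) < ((e a.rev : Fin (d₁+d₂)) : ℕ) := h2
    dsimp only
    omega
  have := sm_le hg k.rev
  have hrr : k.rev.rev = k := Fin.rev_rev k
  rw [hrr] at this
  have hv : ((k.rev : Fin d₁) : ℕ) = d₁ - 1 - k := by
    have := k.isLt
    simp [Fin.rev]; omega
  have hk := k.isLt
  have := hlt k
  omega

def emb0 (d₁ d₂ : ℕ) : Fin d₁ ↪ Fin (d₁ + d₂) :=
  ⟨fun k => ⟨d₂ + (k : ℕ), by omega⟩, by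
    intro a b h
    have := congrArg Fin.val h
    simp at this
    exact Fin.ext this⟩

@[simp] lemma emb0_apply (d₁ d₂ : ℕ) (k : Fin d₁) :
    (emb0 d₁ d₂ k : ℕ) = d₂ + (k : ℕ) := rfl

lemma S0_eq (d₁ d₂ : ℕ) :
    Finset.univ.filter (fun j : Fin (d₁ + d₂) => d₂ ≤ (j : ℕ))
      = Finset.univ.map (emb0 d₁ d₂) := by
  ext j
  simp only [Finset.mem_filter, Finset.mem_univ, true_and, Finset.mem_map]
  constructor
  · intro hj
    refine ⟨⟨(j : ℕ) - d₂, by have := j.isLt; omega⟩, ?_⟩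
    apply Fin.ext
    show d₂ + ((j : ℕ) - d₂) = (j : ℕ)
    omega
  · rintro ⟨k, -, rfl⟩
    show d₂ ≤ d₂ + (k : ℕ)
    omega

lemma S0_card (d₁ d₂ : ℕ) :
    (Finset.univ.filter (fun j : Fin (d₁ + d₂) => d₂ ≤ (j : ℕ))).card = d₁ := by
  rw [S0_eq, Finset.card_map, Finset.card_univ, Fintype.card_fin]

lemma prod_S0_le {d₁ d₂ : ℕ} (f : Fin (d₁ + d₂) → ℝ) (hf0 : ∀ i, 0 ≤ f i)
    (hdec : ∀ i j : Fin (d₁ + d₂), i ≤ j → f j ≤ f i)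
    (S : Finset (Fin (d₁ + d₂))) (hc : S.card = d₁) :
    ∏ j ∈ Finset.univ.filter (fun j : Fin (d₁ + d₂) => d₂ ≤ (j : ℕ)), f j
      ≤ ∏ j ∈ S, f j := by
  have hS : S = Finset.univ.map (S.orderEmbOfFin hc).toEmbedding := by
    ext j
    simp only [Finset.mem_map, Finset.mem_univ, true_and, RelEmbedding.coe_toEmbedding]
    constructor
    · intro hj
      have : j ∈ Set.range (S.orderEmbOfFin hc) := by
        rw [Finset.range_orderEmbOfFin]; exact hj
      obtain ⟨k, hk⟩ := this
      exact ⟨k, hk⟩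
    · rintro ⟨k, rfl⟩
      exact Finset.orderEmbOfFin_mem S hc k
  rw [S0_eq, hS, Finset.prod_map, Finset.prod_map]
  apply Finset.prod_le_prod
  · intro k _; exact hf0 _
  · intro k _
    apply hdec
    rw [Fin.le_def]
    show ((S.orderEmbOfFin hc k : Fin (d₁ + d₂)) : ℕ) ≤ d₂ + (k : ℕ)
    exact emb_le S hc k

theorem jisa_two_subspace_optimal_assignment {d₁ d₂ : ℕ}
    (V₁ V₂ : Matrix (Fin (d₁ + d₂)) (Fin (d₁ + d₂)) ℂ)
    (hV₁ : V₁.PosDef) (hV₂ : V₂.PosDef)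
    (Q : Matrix (Fin (d₁ + d₂)) (Fin (d₁ + d₂)) ℂ)
    (hQ : IsUnit Q) (hQfac : Qᴴ * Q = V₂)
    (U : Matrix (Fin (d₁ + d₂)) (Fin (d₁ + d₂)) ℂ)
    (hUorth : Uᴴ * U = 1)
    (Λ : Fin (d₁ + d₂) → ℝ) (hΛpos : ∀ i, 0 < Λ i)
    (hΛdec : ∀ i j, i ≤ j → Λ j ≤ Λ i)
    (heig : (Q⁻¹)ᴴ * V₁ * Q⁻¹
      = U * Matrix.diagonal (fun i => (Λ i : ℂ)) * Uᴴ) :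
    let Mmat : Finset (Fin (d₁ + d₂)) → Matrix (Fin (d₁ + d₂)) (Fin (d₁ + d₂)) ℂ :=
      fun S => Matrix.of fun i j =>
        if j ∈ S then U i j / (Real.sqrt (Λ j) : ℂ) else U i j
    let W : Finset (Fin (d₁ + d₂)) → Matrix (Fin (d₁ + d₂)) (Fin (d₁ + d₂)) ℂ :=
      fun S => Q⁻¹ * Mmat S
    let cost : Finset (Fin (d₁ + d₂)) → ℝ := fun S =>
      (∑ j ∈ S, ((W S)ᴴ * V₁ * W S) j j
        + ∑ j ∈ Sᶜ, ((W S)ᴴ * V₂ * W S) j j).re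
      - 2 * Real.log (‖(W S).det‖)
    let S₀ : Finset (Fin (d₁ + d₂)) :=
      Finset.univ.filter (fun j => d₂ ≤ (j : ℕ))
    ∀ S : Finset (Fin (d₁ + d₂)), S.card = d₁ →
      ‖(W S).det‖ ≤ ‖(W S₀).det‖ ∧ cost S₀ ≤ cost S := by
  intro Mmat W cost S₀ S hc
  -- diagonal scaling vector
  set dv : Finset (Fin (d₁ + d₂)) → Fin (d₁ + d₂) → ℂ :=
    fun T j => if j ∈ T then ((Real.sqrt (Λ j) : ℂ))⁻¹ else 1 with hdv
  have hM : ∀ T : Finset (Fin (d₁ + d₂)), Mmat T = U * Matrix.diagonal (dv T) := by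
    intro T
    ext i j
    show (if j ∈ T then U i j / (Real.sqrt (Λ j) : ℂ) else U i j) = _
    rw [Matrix.mul_diagonal]
    simp only [hdv]
    split <;> simp [div_eq_mul_inv]
  have hWdef : ∀ T : Finset (Fin (d₁ + d₂)), W T = Q⁻¹ * (U * Matrix.diagonal (dv T)) := by
    intro T; show Q⁻¹ * Mmat T = _; rw [hM]
  have hQd : IsUnit Q.det := (isUnit_iff_isUnit_det Q).mp hQ
  have hQHd : IsUnit Qᴴ.det := by rw [det_conjTranspose]; exact hQd.star
  have sqrt_pos : ∀ j : Fin (d₁ + d₂), 0 < Real.sqrt (Λ j) := fun j => Real.sqrt_pos.mpr (hΛpos j)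
  -- |det U| = 1
  have hdetU : ‖U.det‖ = 1 := by
    have h := congrArg Matrix.det hUorth
    rw [det_mul, det_conjTranspose, det_one] at h
    rw [Complex.star_def, mul_comm, Complex.mul_conj] at h
    have h2 : Complex.normSq U.det = 1 := by exact_mod_cast h
    have h3 := Complex.sq_norm U.det
    have h4 := norm_nonneg U.det
    nlinarith
  -- |det W T|
  have habs : ∀ T : Finset (Fin (d₁ + d₂)),
      ‖(W T).det‖
        = ‖(Q⁻¹).det‖ * ∏ j ∈ T, (Real.sqrt (Λ j))⁻¹ := by
    intro T
    rw [hWdef, det_mul, det_mul, norm_mul, norm_mul, hdetU, one_mul,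
      det_diagonal, norm_prod]
    congr 1
    have : ∀ j, ‖dv T j‖ = if j ∈ T then (Real.sqrt (Λ j))⁻¹ else 1 := by
      intro j
      simp only [hdv]
      split <;> simp [norm_inv, Complex.norm_real, Real.norm_eq_abs, abs_of_nonneg (Real.sqrt_nonneg _)]
    simp_rw [this]
    rw [Finset.prod_ite_mem, Finset.univ_inter]
  have hQinvdet : ‖(Q⁻¹).det‖ ≠ 0 := by
    rw [det_nonsing_inv, Ring.inverse_eq_inv']
    simp [hQd.ne_zero]
  have hQinvpos : 0 < ‖(Q⁻¹).det‖ :=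
    lt_of_le_of_ne (norm_nonneg _) (Ne.symm hQinvdet)
  have hpos : ∀ T : Finset (Fin (d₁ + d₂)), 0 < ‖(W T).det‖ := by
    intro T
    rw [habs]
    apply mul_pos hQinvpos
    exact Finset.prod_pos fun j _ => inv_pos.mpr (sqrt_pos j)
  -- determinant inequality
  have hdetineq : ‖(W S).det‖ ≤ ‖(W S₀).det‖ := by
    rw [habs, habs]
    apply mul_le_mul_of_nonneg_left _ (norm_nonneg _)
    rw [Finset.prod_inv_distrib, Finset.prod_inv_distrib]
    apply inv_anti₀
    · exact Finset.prod_pos fun j _ => sqrt_pos j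
    · exact prod_S0_le (fun j => Real.sqrt (Λ j)) (fun j => (sqrt_pos j).le)
        (fun i j hij => Real.sqrt_le_sqrt (hΛdec i j hij)) S hc
  refine ⟨hdetineq, ?_⟩
  -- congruence computations
  have hV2id : (Q⁻¹)ᴴ * V₂ * Q⁻¹ = 1 := by
    rw [← hQfac, conjTranspose_nonsing_inv, Matrix.mul_assoc (Qᴴ⁻¹), Matrix.mul_assoc Qᴴ Q Q⁻¹,
      Matrix.mul_nonsing_inv _ hQd, Matrix.mul_one, Matrix.nonsing_inv_mul _ hQHd]
  have hKey : ∀ (T : Finset (Fin (d₁ + d₂))) (A B : Matrix (Fin (d₁ + d₂)) (Fin (d₁ + d₂)) ℂ),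
      (Q⁻¹)ᴴ * A * Q⁻¹ = B →
      (W T)ᴴ * A * W T = (U * Matrix.diagonal (dv T))ᴴ * B * (U * Matrix.diagonal (dv T)) := by
    intro T A B h
    rw [hWdef, ← h]
    simp only [conjTranspose_mul, Matrix.mul_assoc]
  have hU2 : ∀ X : Matrix (Fin (d₁ + d₂)) (Fin (d₁ + d₂)) ℂ, Uᴴ * (U * X) = X := fun X => by
    rw [← Matrix.mul_assoc, hUorth, Matrix.one_mul]
  have h1 : ∀ T : Finset (Fin (d₁ + d₂)), (W T)ᴴ * V₁ * W T
      = Matrix.diagonal (fun j => star (dv T j) * ((Λ j : ℂ) * dv T j)) := by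
    intro T
    rw [hKey T V₁ _ heig]
    simp only [conjTranspose_mul, Matrix.mul_assoc, diagonal_conjTranspose]
    rw [hU2, hU2]
    rw [← Matrix.mul_assoc, diagonal_mul_diagonal, diagonal_mul_diagonal]
    apply congrArg
    funext j
    simp only [Pi.star_apply]
    ring
  have h2 : ∀ T : Finset (Fin (d₁ + d₂)), (W T)ᴴ * V₂ * W T
      = Matrix.diagonal (fun j => star (dv T j) * dv T j) := by
    intro T
    rw [hKey T V₂ _ hV2id]
    simp only [conjTranspose_mul, Matrix.mul_assoc, diagonal_conjTranspose, Matrix.one_mul]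
    rw [hU2, diagonal_mul_diagonal]
    congr 1
  -- diagonal entries
  have hent1 : ∀ (T : Finset (Fin (d₁ + d₂))) (j : Fin (d₁ + d₂)), j ∈ T →
      star (dv T j) * ((Λ j : ℂ) * dv T j) = 1 := by
    intro T j hj
    simp only [hdv, if_pos hj]
    rw [← Complex.ofReal_inv, Complex.star_def, Complex.conj_ofReal, ← Complex.ofReal_mul,
      ← Complex.ofReal_mul]
    norm_cast
    rw [← Real.mul_self_sqrt (hΛpos j).le]
    field_simp
    rw [Real.sqrt_sq (Real.sqrt_nonneg _)]
    exact div_self (pow_pos (Real.sqrt_pos.mpr (hΛpos j)) 2).ne'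
  have hent2 : ∀ (T : Finset (Fin (d₁ + d₂))) (j : Fin (d₁ + d₂)), j ∉ T →
      star (dv T j) * dv T j = 1 := by
    intro T j hj
    simp [hdv, if_neg hj]
  -- cost formula
  have hcost : ∀ T : Finset (Fin (d₁ + d₂)), T.card = d₁ →
      cost T = (d₁ + d₂ : ℝ) - 2 * Real.log (‖(W T).det‖) := by
    intro T hT
    show (∑ j ∈ T, ((W T)ᴴ * V₁ * W T) j j
        + ∑ j ∈ Tᶜ, ((W T)ᴴ * V₂ * W T) j j).re
      - 2 * Real.log (‖(W T).det‖) = _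
    have e1 : ∑ j ∈ T, ((W T)ᴴ * V₁ * W T) j j = (d₁ : ℂ) := by
      rw [h1]
      rw [Finset.sum_congr rfl (fun j hj => by
        rw [Matrix.diagonal_apply_eq, hent1 T j hj])]
      simp [hT]
    have e2 : ∑ j ∈ Tᶜ, ((W T)ᴴ * V₂ * W T) j j = (d₂ : ℂ) := by
      rw [h2]
      rw [Finset.sum_congr rfl (fun j hj => by
        rw [Matrix.diagonal_apply_eq, hent2 T j (Finset.mem_compl.mp hj)])]
      have : Tᶜ.card = d₂ := by
        rw [Finset.card_compl, hT, Fintype.card_fin]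
        omega
      simp [this]
    rw [e1, e2]
    norm_num
  rw [hcost S₀ (S0_card d₁ d₂), hcost S hc]
  have hlog : Real.log (‖(W S).det‖) ≤ Real.log (‖(W S₀).det‖) :=
    Real.log_le_log (hpos S) hdetineq
  linarith
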